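/- arXiv:1909.11982 — 3 statements merged into one kernel-verified Lean document; each statement's English description precedes it below -/
import Mathlib

section
/- For any bipartite graph G with bipartition (X,Y) where |X| = r, |Y| = s and r ≤ s, the product of edge-connectivities satisfies κ'(G)·κ'(G^{bc}) ≤ ⌈r/2⌉·⌊r/2⌋. -/
open SimpleGraph Sum

noncomputable def minDeg {V : Type*} [Fintype V] (G : SimpleGraph V) : ℕ :=
  @SimpleGraph.minDegree V G _ (Classical.decRel _)

/-- Edge-connectivity: minimum size of an edge set whose deletion disconnects
the graph (0 if the graph is disconnected or cannot be disconnected). -/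
noncomputable def edgeConn {V : Type*} [Fintype V] (G : SimpleGraph V) : ℕ :=
  sInf {n | ∃ F : Finset (Sym2 V), F.card = n ∧ ↑F ⊆ G.edgeSet ∧
    ¬ (G.deleteEdges ↑F).Connected}

/-- Vertex-connectivity: minimum size of a vertex set whose removal leaves a
graph which is disconnected or has only one vertex. -/
noncomputable def vertConn {V : Type*} [Fintype V] (G : SimpleGraph V) : ℕ :=
  sInf {n | ∃ S : Finset V, S.card = n ∧
    (¬ (G.induce ((↑S : Set V)ᶜ)).Connected ∨ Nat.card (((↑S : Set V)ᶜ : Set V)) = 1)}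

/-- `G` on `X ⊕ Y` is bipartite with parts `X` and `Y`. -/
def IsBipartition {X Y : Type*} (G : SimpleGraph (X ⊕ Y)) : Prop :=
  ∀ a b, G.Adj a b → (a.isLeft ∧ b.isRight) ∨ (a.isRight ∧ b.isLeft)

/-- Bipartite complement with respect to the bipartition `(X, Y)`. -/
def bipCompl {X Y : Type*} (G : SimpleGraph (X ⊕ Y)) : SimpleGraph (X ⊕ Y) where
  Adj a b := ((a.isLeft ∧ b.isRight) ∨ (a.isRight ∧ b.isLeft)) ∧ ¬ G.Adj a b
  symm := ⟨fun a b h => ⟨h.1.symm.imp And.symm And.symm, fun h' => h.2 h'.symm⟩⟩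
  loopless := ⟨fun a h => by rcases h.1 with ⟨h1, h2⟩ | ⟨h1, h2⟩ <;> cases a <;> simp_all⟩

lemma aux_prod (a b : ℕ) : a * b ≤ ((a + b + 1) / 2) * ((a + b) / 2) := by
  have key : 4 * (a * b) ≤ (a + b) * (a + b) := by
    zify; nlinarith [sq_nonneg ((a : ℤ) - b)]
  rcases Nat.even_or_odd (a + b) with ⟨k, hk⟩ | ⟨k, hk⟩
  · have h1 : (a + b + 1) / 2 = k := by omega
    have h2 : (a + b) / 2 = k := by omega
    rw [h1, h2]
    have hx : (a + b) * (a + b) = 4 * (k * k) := by rw [hk]; ring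
    exact Nat.le_of_mul_le_mul_left (by linarith : 4 * (a * b) ≤ 4 * (k * k)) (by norm_num)
  · have h1 : (a + b + 1) / 2 = k + 1 := by omega
    have h2 : (a + b) / 2 = k := by omega
    rw [h1, h2]
    have hx : (a + b) * (a + b) = 4 * ((k + 1) * k) + 1 := by rw [hk]; ring
    have h4 : 4 * (a * b) < 4 * ((k + 1) * k + 1) := by linarith
    exact Nat.le_of_lt_succ (Nat.lt_of_mul_lt_mul_left h4)

lemma aux_edgeConn_le {V : Type*} [Fintype V] [DecidableEq V] (G : SimpleGraph V)
    [DecidableRel G.Adj] (v w : V) (hvw : v ≠ w) : edgeConn G ≤ G.degree v := by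
  apply Nat.sInf_le
  refine ⟨G.incidenceFinset v, G.card_incidenceFinset_eq_degree v, ?_, ?_⟩
  · intro e he
    exact G.incidenceSet_subset v (by simpa [mem_incidenceFinset] using he)
  · intro hconn
    obtain ⟨p⟩ := hconn.preconnected v w
    cases p with
    | nil => exact hvw rfl
    | cons h q =>
      rw [deleteEdges_adj] at h
      exact h.2 (by simp [mem_incidenceFinset, mem_incidenceSet, h.1])

theorem edgeConn_prod_bound {X Y : Type*} [Fintype X] [Fintype Y] {r s : ℕ}
    (G : SimpleGraph (X ⊕ Y)) (hbip : IsBipartition G)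
    (hr : Fintype.card X = r) (hs : Fintype.card Y = s) (hrs : r ≤ s) :
    edgeConn G * edgeConn (bipCompl G) ≤ ((r + 1) / 2) * (r / 2) := by
  classical
  rcases Nat.eq_zero_or_pos r with hr0 | hrpos
  · -- X is empty, so G has no edges; edgeConn G = 0
    subst hr0
    have hX : IsEmpty X := Fintype.card_eq_zero_iff.mp hr
    have hedge : G.edgeSet = ∅ := by
      ext e
      induction e using Sym2.inductionOn with
      | hf a b =>
        simp only [mem_edgeSet, Set.mem_empty_iff_false, iff_false]
        intro hab
        rcases hbip a b hab with ⟨h1, _⟩ | ⟨_, h2⟩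
        · cases a with
          | inl x => exact hX.elim x
          | inr y => simp at h1
        · cases b with
          | inl x => exact hX.elim x
          | inr y => simp at h2
    have h0 : edgeConn G = 0 := by
      by_cases hc : G.Connected
      · rw [edgeConn, Nat.sInf_eq_zero]
        right
        ext n
        simp only [Set.mem_setOf_eq, Set.mem_empty_iff_false, iff_false]
        rintro ⟨F, hF, hsub, hnc⟩
        have : F = ∅ := by
          rw [← Finset.coe_eq_empty]
          rw [hedge] at hsub
          exact Set.subset_eq_empty hsub rfl
        apply hnc
        rw [this]
        simpa [deleteEdges] using hc
      · rw [edgeConn, Nat.sInf_eq_zero]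
        left
        exact ⟨∅, by simp, by simp, by simpa [deleteEdges] using hc⟩
    simp [h0]
  · -- r ≥ 1 : pick x : X and y : Y
    have hX : Nonempty X := Fintype.card_pos_iff.mp (hr ▸ hrpos)
    have hY : Nonempty Y := Fintype.card_pos_iff.mp (hs ▸ lt_of_lt_of_le hrpos hrs)
    obtain ⟨x⟩ := hX
    obtain ⟨y⟩ := hY
    have hne : (inr y : X ⊕ Y) ≠ inl x := by simp
    have h1 : edgeConn G ≤ G.degree (inr y) := aux_edgeConn_le G (inr y) (inl x) hne
    have h2 : edgeConn (bipCompl G) ≤ (bipCompl G).degree (inr y) :=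
      aux_edgeConn_le (bipCompl G) (inr y) (inl x) hne
    have hsum : G.degree (inr y) + (bipCompl G).degree (inr y) = r := by
      rw [← hr]
      rw [← card_neighborFinset_eq_degree, ← card_neighborFinset_eq_degree]
      rw [← Finset.card_union_of_disjoint]
      · have hunion : G.neighborFinset (inr y) ∪ (bipCompl G).neighborFinset (inr y)
            = Finset.univ.image (inl : X → X ⊕ Y) := by
          ext z
          simp only [Finset.mem_union, mem_neighborFinset, Finset.mem_image,
            Finset.mem_univ, true_and]
          constructor
          · rintro (h | h)
            · rcases hbip _ _ h with ⟨hl, _⟩ | ⟨_, hl⟩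
              · simp at hl
              · cases z with
                | inl x' => exact ⟨x', rfl⟩
                | inr y' => simp at hl
            · rcases h.1 with ⟨hl, _⟩ | ⟨_, hl⟩
              · simp at hl
              · cases z with
                | inl x' => exact ⟨x', rfl⟩
                | inr y' => simp at hl
          · rintro ⟨x', rfl⟩
            by_cases hadj : G.Adj (inr y) (inl x')
            · exact Or.inl hadj
            · exact Or.inr ⟨Or.inr ⟨rfl, rfl⟩, hadj⟩
        rw [hunion, Finset.card_image_of_injective _ inl_injective, Finset.card_univ]
      · rw [Finset.disjoint_left]
        intro z hz hz'
        rw [mem_neighborFinset] at hz hz'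
        exact hz'.2 hz
    calc edgeConn G * edgeConn (bipCompl G)
        ≤ G.degree (inr y) * (bipCompl G).degree (inr y) := Nat.mul_le_mul h1 h2
      _ ≤ ((G.degree (inr y) + (bipCompl G).degree (inr y) + 1) / 2)
          * ((G.degree (inr y) + (bipCompl G).degree (inr y)) / 2) := aux_prod _ _
      _ = ((r + 1) / 2) * (r / 2) := by rw [hsum]
end

section
/- Let G be a bipartite graph with bipartition (X,Y), |X| = r ≥ 2, |Y| = s, r ≤ s, and exactly m = r + s − 1 edges. Then κ'(G) + κ'(G^{bc}) ≤ r − 1. -/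
open SimpleGraph Sum

/-- If some vertex is isolated and there is another vertex, the graph is disconnected. -/
lemma not_connected_of_isolated {V : Type*} {H : SimpleGraph V} {v u : V}
    (hne : u ≠ v) (hiso : ∀ w, ¬ H.Adj v w) : ¬ H.Connected := by
  intro hc
  obtain ⟨p⟩ := hc.preconnected v u
  cases p with
  | nil => exact hne rfl
  | cons h _ => exact hiso _ h

/-- Edge connectivity is at most the degree of any vertex, provided another vertex exists. -/
lemma edgeConn_le_degree {V : Type*} [Fintype V] [DecidableEq V] (H : SimpleGraph V)
    [DecidableRel H.Adj] (v u : V) (hne : u ≠ v) :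
    edgeConn H ≤ H.degree v := by
  apply Nat.sInf_le
  refine ⟨H.incidenceFinset v, H.card_incidenceFinset_eq_degree v, ?_, ?_⟩
  · intro e he
    exact H.incidenceSet_subset v ((H.mem_incidenceFinset v e).mp he)
  · refine not_connected_of_isolated hne fun w hw => ?_
    rw [deleteEdges_adj] at hw
    exact hw.2 ((H.mem_incidenceFinset v _).mpr ((H.mem_incidenceSet v w).2 hw.1))

theorem edgeConn_sum_le_sub_one_tree {X Y : Type*} [Fintype X] [Fintype Y] {r s m : ℕ}
    (G : SimpleGraph (X ⊕ Y)) (hbip : IsBipartition G)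
    (hr : Fintype.card X = r) (hs : Fintype.card Y = s) (hrs : r ≤ s) (hr2 : 2 ≤ r)
    (hm : G.edgeSet.ncard = m) (hm1 : m + 1 = r + s) :
    edgeConn G + edgeConn (bipCompl G) ≤ r - 1 := by
  classical
  have hcardV : Fintype.card (X ⊕ Y) = r + s := by
    simp [Fintype.card_sum, hr, hs]
  have hmcard : G.edgeFinset.card = m := by
    rw [← hm, Set.ncard_eq_toFinset_card', Set.toFinset_card, ← edgeFinset_card]
  -- handshake: some vertex of degree ≤ 1
  have hsum : ∑ w, G.degree w = 2 * m := by
    rw [G.sum_degrees_eq_twice_card_edges, hmcard]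
  have hlow : ∃ v : X ⊕ Y, G.degree v ≤ 1 := by
    by_contra hno
    push_neg at hno
    have : 2 * (r + s) ≤ ∑ w, G.degree w := by
      calc 2 * (r + s) = ∑ _w : X ⊕ Y, 2 := by
            rw [Finset.sum_const, Finset.card_univ, hcardV]; ring
        _ ≤ ∑ w, G.degree w := Finset.sum_le_sum fun w _ => hno w
    omega
  obtain ⟨v, hv⟩ := hlow
  -- another vertex exists
  have h1lt : 1 < Fintype.card (X ⊕ Y) := by omega
  obtain ⟨u, hu⟩ := Fintype.exists_ne_of_one_lt_card h1lt v
  -- edge count via Y-side incidence sets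
  have hbi : G.edgeFinset = Finset.univ.biUnion
      (fun y : Y => G.incidenceFinset (inr y)) := by
    ext e
    simp only [Finset.mem_biUnion, Finset.mem_univ, true_and, mem_incidenceFinset,
      mem_edgeFinset]
    constructor
    · induction e with
      | _ a b =>
        intro he
        rw [mem_edgeSet] at he
        rcases hbip a b he with ⟨ha, hb⟩ | ⟨ha, hb⟩
        · obtain ⟨y, rfl⟩ := isRight_iff.mp hb
          exact ⟨y, by rw [Sym2.eq_swap]; exact (G.mem_incidenceSet _ _).2 he.symm⟩
        · obtain ⟨y, rfl⟩ := isRight_iff.mp ha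
          exact ⟨y, (G.mem_incidenceSet _ _).2 he⟩
    · rintro ⟨y, hy⟩
      exact G.incidenceSet_subset _ hy
  have hdisj : ∀ y₁ ∈ (Finset.univ : Finset Y), ∀ y₂ ∈ Finset.univ, y₁ ≠ y₂ →
      Disjoint (G.incidenceFinset (inr y₁)) (G.incidenceFinset (inr y₂)) := by
    intro y₁ _ y₂ _ hne
    rw [Finset.disjoint_left]
    intro e h1 h2
    rw [mem_incidenceFinset] at h1 h2
    have : e = s(inr y₁, inr y₂) :=
      G.incidenceSet_inter_incidenceSet_subset (by simp [hne]) ⟨h1, h2⟩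
    subst this
    have := h1.1
    rw [mem_edgeSet] at this
    rcases hbip _ _ this with ⟨h, _⟩ | ⟨_, h⟩ <;> simp at h
  have hmsum : ∑ y : Y, G.degree (inr y) = m := by
    rw [← hmcard, hbi, Finset.card_biUnion hdisj]
    exact Finset.sum_congr rfl fun y _ => (G.card_incidenceFinset_eq_degree _).symm
  -- some y with degree ≥ 2
  have hy2 : ∃ y : Y, 2 ≤ G.degree (inr y) := by
    by_contra hno
    push_neg at hno
    have : ∑ y : Y, G.degree (inr y) ≤ s := by
      calc ∑ y : Y, G.degree (inr y) ≤ ∑ _y : Y, 1 :=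
            Finset.sum_le_sum fun y _ => Nat.lt_succ_iff.mp (hno y)
        _ = s := by simp [hs]
    omega
  obtain ⟨y, hy⟩ := hy2
  -- degree of inr y in bipCompl is at most r - 2
  set A : Finset (X ⊕ Y) := Finset.univ.image inl with hA
  have hAcard : A.card = r := by
    rw [hA, Finset.card_image_of_injective _ inl_injective, Finset.card_univ, hr]
  have hGsub : G.neighborFinset (inr y) ⊆ A := by
    intro w hw
    rw [mem_neighborFinset] at hw
    rcases hbip _ _ hw with ⟨h, _⟩ | ⟨_, h⟩
    · simp at h
    · obtain ⟨x, rfl⟩ := isLeft_iff.mp h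
      simp [hA]
  have hbcsub : (bipCompl G).neighborFinset (inr y) ⊆ A \ G.neighborFinset (inr y) := by
    intro w hw
    rw [mem_neighborFinset] at hw
    obtain ⟨hside, hnadj⟩ : _ ∧ ¬ G.Adj _ _ := hw
    rw [Finset.mem_sdiff]
    constructor
    · rcases hside with ⟨h, _⟩ | ⟨_, h⟩
      · simp at h
      · obtain ⟨x, rfl⟩ := isLeft_iff.mp h
        simp [hA]
    · rw [mem_neighborFinset]; exact hnadj
  have hbcdeg : (bipCompl G).degree (inr y) ≤ r - 2 := by
    calc (bipCompl G).degree (inr y) = ((bipCompl G).neighborFinset (inr y)).card := rfl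
      _ ≤ (A \ G.neighborFinset (inr y)).card := Finset.card_le_card hbcsub
      _ = A.card - G.degree (inr y) := by rw [Finset.card_sdiff_of_subset hGsub]; rfl
      _ ≤ r - 2 := by rw [hAcard]; omega
  -- combine
  have h1 : edgeConn G ≤ 1 := le_trans (edgeConn_le_degree G v u hu) hv
  have h2 : edgeConn (bipCompl G) ≤ r - 2 := by
    have hne : u = v ∨ u ≠ v := em _
    exact le_trans (edgeConn_le_degree (bipCompl G) (inr y) _
      (Fintype.exists_ne_of_one_lt_card h1lt (inr y)).choose_spec) hbcdeg
  omega
end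

section
/- Let G be a bipartite graph with bipartition (X,Y), |X| = r ≤ s = |Y|, n = r + s vertices and m edges with m ≥ n and s dividing m, say m = ds. Then κ'(G)·κ'(G^{bc}) ≤ d(r − d) = (m/s)(r − m/s). -/
open SimpleGraph Sum

section Aux
variable {V : Type*} [Fintype V]

lemma edgeConn_le_degree' [DecidableEq V] (G : SimpleGraph V) [DecidableRel G.Adj]
    {v w : V} (hvw : v ≠ w) : edgeConn G ≤ G.degree v := by
  apply Nat.sInf_le
  refine ⟨G.incidenceFinset v, G.card_incidenceFinset_eq_degree v, ?_, ?_⟩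
  · intro e he
    simp only [Finset.mem_coe, SimpleGraph.mem_incidenceFinset] at he
    exact he.1
  · intro hc
    obtain ⟨p⟩ := hc.preconnected v w
    cases p with
    | nil => exact hvw rfl
    | cons ha _ =>
      rw [SimpleGraph.deleteEdges_adj] at ha
      exact ha.2 (by
        simp only [Finset.mem_coe, SimpleGraph.mem_incidenceFinset,
          SimpleGraph.mem_incidenceSet]
        exact ha.1)
end Aux

section Bip
variable {X Y : Type*} [Fintype X] [Fintype Y] (G : SimpleGraph (X ⊕ Y))

lemma nbhd_subset (hbip : IsBipartition G) [DecidableEq (X ⊕ Y)] [DecidableRel G.Adj] (y : Y) :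
    G.neighborFinset (inr y) ⊆ Finset.univ.image inl := by
  intro a ha
  rw [SimpleGraph.mem_neighborFinset] at ha
  rcases hbip _ _ ha with ⟨h1, _⟩ | ⟨_, h2⟩
  · simp at h1
  · cases a with
    | inl x => simp
    | inr y' => simp at h2

lemma edge_count (hbip : IsBipartition G) [DecidableEq (X ⊕ Y)] [DecidableRel G.Adj] :
    ∑ y : Y, G.degree (inr y) = G.edgeFinset.card := by
  classical
  have hU : G.edgeFinset = Finset.univ.biUnion (fun y : Y => G.incidenceFinset (inr y)) := by
    ext e
    induction e with
    | h a b =>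
      simp only [SimpleGraph.mem_edgeFinset, Finset.mem_biUnion, Finset.mem_univ, true_and,
        SimpleGraph.mem_incidenceFinset, SimpleGraph.mem_incidenceSet]
      constructor
      · intro h
        rcases hbip _ _ h with ⟨h1, h2⟩ | ⟨h1, h2⟩
        · cases b with
          | inl x => simp at h2
          | inr y =>
            refine ⟨y, ?_⟩
            rw [SimpleGraph.mem_edgeSet] at *
            exact ⟨h, by simp [Sym2.mem_iff]⟩
        · cases a with
          | inl x => simp at h1
          | inr y =>
            refine ⟨y, ?_⟩
            rw [SimpleGraph.mem_edgeSet] at *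
            exact ⟨h, by simp [Sym2.mem_iff]⟩
      · rintro ⟨y, he, -⟩
        rwa [SimpleGraph.mem_edgeSet] at he
  rw [hU, Finset.card_biUnion]
  · exact Finset.sum_congr rfl fun y _ => (G.card_incidenceFinset_eq_degree (inr y)).symm
  · intro y₁ _ y₂ _ hne
    rw [Function.onFun, Finset.disjoint_left]
    intro e he1 he2
    rw [SimpleGraph.mem_incidenceFinset] at he1 he2
    obtain ⟨hes, hm1⟩ := he1
    obtain ⟨_, hm2⟩ := he2
    induction e with
    | h a b =>
      rw [SimpleGraph.mem_edgeSet] at hes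
      rw [Sym2.mem_iff] at hm1 hm2
      rcases hm1 with h1 | h1 <;> rcases hm2 with h2 | h2
      · exact hne (inr_injective (h1.trans h2.symm))
      · rw [← h1, ← h2] at hes
        rcases hbip _ _ hes with ⟨h, -⟩ | ⟨-, h⟩ <;> simp at h
      · rw [← h1, ← h2] at hes
        rcases hbip _ _ hes with ⟨h, -⟩ | ⟨-, h⟩ <;> simp at h
      · exact hne (inr_injective (h1.trans h2.symm))

lemma deg_compl (hbip : IsBipartition G) [DecidableEq (X ⊕ Y)] [DecidableRel G.Adj]
    [DecidableRel (bipCompl G).Adj] (y : Y)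
    (hr : Fintype.card X = r) :
    G.degree (inr y) + (bipCompl G).degree (inr y) = r := by
  classical
  have hsub := nbhd_subset G hbip y
  have hc : (bipCompl G).neighborFinset (inr y)
      = (Finset.univ.image inl) \ G.neighborFinset (inr y) := by
    ext a
    cases a with
    | inl x =>
      simp only [SimpleGraph.mem_neighborFinset]
      simp [SimpleGraph.mem_neighborFinset, bipCompl]
    | inr y' =>
      simp only [SimpleGraph.mem_neighborFinset]
      simp [SimpleGraph.mem_neighborFinset, bipCompl]
  have hcard : (Finset.univ.image (inl : X → X ⊕ Y)).card = r := by
    rw [Finset.card_image_of_injective _ inl_injective, Finset.card_univ, hr]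
  rw [SimpleGraph.degree, SimpleGraph.degree, hc, Finset.card_sdiff_of_subset hsub, hcard]
  have : (G.neighborFinset (inr y)).card ≤ r := hcard ▸ Finset.card_le_card hsub
  omega

end Bip


theorem edgeConn_prod_le_of_dvd {X Y : Type*} [Fintype X] [Fintype Y] {r s m d : ℕ}
    (G : SimpleGraph (X ⊕ Y)) (hbip : IsBipartition G)
    (hr : Fintype.card X = r) (hs : Fintype.card Y = s) (hrs : r ≤ s)
    (hm : G.edgeSet.ncard = m) (hm1 : r + s ≤ m) (hd : m = d * s) :
    edgeConn G * edgeConn (bipCompl G) ≤ d * (r - d) := by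
  classical
  by_cases hV : IsEmpty (X ⊕ Y)
  · have h0 : edgeConn G = 0 := by
      apply Nat.eq_zero_of_le_zero
      apply Nat.sInf_le
      exact ⟨∅, by simp, by simp, fun h => hV.false h.nonempty.some⟩
    simp [h0]
  · rw [not_isEmpty_iff] at hV
    have hn : 1 ≤ Fintype.card X + Fintype.card Y := by
      rcases hV.some with x | y
      · have : 0 < Fintype.card X := Fintype.card_pos_iff.mpr ⟨x⟩; omega
      · have : 0 < Fintype.card Y := Fintype.card_pos_iff.mpr ⟨y⟩; omega
    have hm0 : 1 ≤ m := by omega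
    -- there is an edge, so X and Y are nonempty
    have hedge : G.edgeSet.Nonempty := by
      rw [← Set.ncard_pos (Set.toFinite _), hm]; omega
    obtain ⟨e, he⟩ := hedge
    obtain ⟨xX, yY⟩ : Nonempty X ∧ Nonempty Y := by
      induction e with
      | h a b =>
        rw [SimpleGraph.mem_edgeSet] at he
        rcases hbip _ _ he with ⟨h1, h2⟩ | ⟨h1, h2⟩ <;>
          [(cases a <;> cases b); (cases a <;> cases b)] <;> simp_all <;>
          exact ⟨⟨‹_›⟩, ⟨‹_›⟩⟩
    have hsum : ∑ y : Y, G.degree (inr y) = m := by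
      rw [edge_count G hbip, ← hm, Set.ncard_eq_toFinset_card']
      exact congrArg Finset.card (by ext; simp)
    have hYne : (Finset.univ : Finset Y).Nonempty := Finset.univ_nonempty
    -- pigeonhole
    have hconst : ∑ _y : Y, d = m := by
      rw [Finset.sum_const, Finset.card_univ, hs, hd]; ring
    obtain ⟨y₁, -, hy₁⟩ := Finset.exists_le_of_sum_le (f := fun y : Y => G.degree (inr y))
      (g := fun _ => d) hYne (by rw [hsum, hconst])
    obtain ⟨y₂, -, hy₂⟩ := Finset.exists_le_of_sum_le (f := fun _ : Y => d)
      (g := fun y : Y => G.degree (inr y)) hYne (by rw [hsum, hconst])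
    obtain ⟨x⟩ := xX
    have h1 : edgeConn G ≤ d :=
      le_trans (edgeConn_le_degree' G (v := inr y₁) (w := inl x) (by simp)) hy₁
    have hdc := deg_compl G hbip y₂ hr
    have h2 : edgeConn (bipCompl G) ≤ r - d :=
      le_trans (edgeConn_le_degree' (bipCompl G) (v := inr y₂) (w := inl x) (by simp))
        (by omega)
    exact Nat.mul_le_mul h1 h2
end
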